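/- Conditional card probability after excluding a dealer natural (Appendix A, different-value case): if count m < t (so the conditioning event has positive probability), then for every value k ≠ m the conditional probability that the first card drawn has value k, given that the dealer's hole card does not have value m, equals (count k / (t − 1)) * ((t − count m − 1) / (t − count m)). (With m = ace and dealer showing a ten this is the formula Q[k] = (a_k/(t−1)) · ((t−a₁−1)/(t−a₁)); with m = ten and dealer showing an ace it is the symmetric formula for d = 1.) -/

import Mathlib

open PMF ENNReal Finset

section aux
variable {α : Type*} [DecidableEq α] [Fintype α]

lemma exists_perm_pair (p q x y : α) (hpq : p ≠ q) (hxy : x ≠ y) :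
    ∃ τ : Equiv.Perm α, τ p = x ∧ τ q = y := by
  refine ⟨(Equiv.swap p x).trans (Equiv.swap ((Equiv.swap p x) q) y), ?_, ?_⟩
  · simp only [Equiv.trans_apply, Equiv.swap_apply_left]
    apply Equiv.swap_apply_of_ne_of_ne
    · intro h
      apply hpq
      apply (Equiv.swap p x).injective
      rw [Equiv.swap_apply_left]
      exact h
    · exact hxy
  · simp [Equiv.trans_apply]

lemma fiber_card_eq (p q : α) {x y x' y' : α} (hxy : x ≠ y) (hxy' : x' ≠ y') :
    (univ.filter fun σ : Equiv.Perm α => σ p = x ∧ σ q = y).card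
      = (univ.filter fun σ : Equiv.Perm α => σ p = x' ∧ σ q = y').card := by
  obtain ⟨τ, hτ1, hτ2⟩ := exists_perm_pair x y x' y' hxy hxy'
  refine Finset.card_bij' (fun σ _ => τ * σ) (fun σ _ => τ⁻¹ * σ) ?_ ?_ ?_ ?_ <;>
      intro σ hσ <;>
      simp only [mem_filter, mem_univ, true_and, Equiv.Perm.mul_apply] at hσ ⊢
  · rw [hσ.1, hσ.2, hτ1, hτ2]; exact ⟨rfl, rfl⟩
  · rw [hσ.1, hσ.2, ← hτ1, ← hτ2, Equiv.Perm.coe_inv, Equiv.symm_apply_apply, Equiv.symm_apply_apply]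
    exact ⟨rfl, rfl⟩
  · simp
  · simp

lemma card_event (p q : α) (hpq : p ≠ q) (E : α → α → Prop)
    [∀ x y : α, Decidable (E x y)] {x₀ y₀ : α} (h₀ : x₀ ≠ y₀) :
    (univ.filter fun σ : Equiv.Perm α => E (σ p) (σ q)).card
      = ∑ x, ∑ y, if E x y ∧ x ≠ y then
          (univ.filter fun σ : Equiv.Perm α => σ p = x₀ ∧ σ q = y₀).card else 0 := by
  rw [Finset.card_eq_sum_card_fiberwise
    (f := fun σ : Equiv.Perm α => (σ p, σ q)) (t := univ) (fun _ _ => mem_univ _)]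
  rw [Fintype.sum_prod_type]
  refine Finset.sum_congr rfl fun x _ => Finset.sum_congr rfl fun y _ => ?_
  rw [Finset.filter_filter]
  by_cases hE : E x y ∧ x ≠ y
  · rw [if_pos hE]
    trans (univ.filter fun σ : Equiv.Perm α => σ p = x ∧ σ q = y).card
    swap
    · exact fiber_card_eq p q hE.2 h₀
    congr 1
    apply Finset.filter_congr
    intro σ _
    simp only [Prod.mk.injEq]
    constructor
    · rintro ⟨-, h1, h2⟩; exact ⟨h1, h2⟩
    · rintro ⟨h1, h2⟩; exact ⟨by rw [h1, h2]; exact hE.1, h1, h2⟩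
  · rw [if_neg hE, Finset.card_eq_zero, Finset.filter_eq_empty_iff]
    rintro σ - ⟨hEσ, hpr⟩
    obtain ⟨h1, h2⟩ := Prod.mk.injEq .. ▸ hpr
    apply hE
    refine ⟨by rwa [h1, h2] at hEσ, ?_⟩
    rw [← h1, ← h2]
    exact fun h => hpq (σ.injective h)

end aux

lemma ratio_helper (A B C D c F : ℝ≥0∞) (hC : C ≠ 0) (hC' : C ≠ ∞) (hD : D ≠ 0)
    (hD' : D ≠ ∞) (hc : c ≠ 0) (hc' : c ≠ ∞) (hF : F ≠ 0) (hF' : F ≠ ∞) :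
    (A * ((B * c)) / F) / (D * (C * c) / F) = (A / C) * (B / D) := by
  rw [div_eq_mul_inv (A * (B * c)) F, div_eq_mul_inv (D * (C * c)) F,
    ENNReal.mul_div_mul_right _ _ (by simp [hF']) (by simp [hF])]
  rw [show A * (B * c) = (A * B) * c by ring, show D * (C * c) = (D * C) * c by ring,
    ENNReal.mul_div_mul_right _ _ hc hc']
  rw [div_eq_mul_inv, div_eq_mul_inv, div_eq_mul_inv,
    ENNReal.mul_inv (Or.inl hD) (Or.inl hD')]
  ring

lemma cond_aux (t : ℕ) (ht : 2 ≤ t) (v : Fin t → Fin 10) (k m : Fin 10) (hkm : k ≠ m)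
    (hm : (Finset.univ.filter (fun i => v i = m)).card < t) (p q : Fin t) (hpq : p ≠ q) :
    ((PMF.uniformOfFintype (Equiv.Perm (Fin t))).toOuterMeasure
        {σ : Equiv.Perm (Fin t) | v (σ p) = k ∧ v (σ q) ≠ m})
      / ((PMF.uniformOfFintype (Equiv.Perm (Fin t))).toOuterMeasure
          {σ : Equiv.Perm (Fin t) | v (σ q) ≠ m})
      = (((Finset.univ.filter (fun i => v i = k)).card : ℝ≥0∞)
            / ((t - 1 : ℕ) : ℝ≥0∞))
        * (((t - (Finset.univ.filter (fun i => v i = m)).card - 1 : ℕ) : ℝ≥0∞)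
            / ((t - (Finset.univ.filter (fun i => v i = m)).card : ℕ) : ℝ≥0∞)) := by
  set a := (Finset.univ.filter (fun i => v i = k)).card with ha
  set b := (Finset.univ.filter (fun i => v i = m)).card with hb
  set c := (univ.filter fun σ : Equiv.Perm (Fin t) => σ p = p ∧ σ q = q).card with hcdef
  have hc0 : c ≠ 0 := by
    rw [hcdef]
    apply Finset.card_ne_zero_of_mem (a := 1)
    simp
  have hBc : (univ.filter fun y : Fin t => ¬ (v y = m)).card = t - b := by
    rw [Finset.filter_not, Finset.card_sdiff_of_subset (Finset.filter_subset _ _),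
      Finset.card_univ, Fintype.card_fin]
  -- numerator count
  have hN : Nat.card ↥{σ : Equiv.Perm (Fin t) | v (σ p) = k ∧ v (σ q) ≠ m}
      = a * ((t - b - 1) * c) := by
    rw [Nat.card_congr (show ↥{σ : Equiv.Perm (Fin t) | v (σ p) = k ∧ v (σ q) ≠ m}
      ≃ {σ : Equiv.Perm (Fin t) // v (σ p) = k ∧ ¬ (v (σ q) = m)} from Equiv.refl _)]
    rw [Nat.card_eq_fintype_card, Fintype.card_subtype]
    rw [card_event p q hpq (fun x y => v x = k ∧ ¬ (v y = m)) hpq]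
    have step : ∀ x : Fin t, (∑ y : Fin t, if (v x = k ∧ ¬ v y = m) ∧ x ≠ y then c else 0)
        = if v x = k then (t - b - 1) * c else 0 := by
      intro x
      by_cases hx : v x = k
      · rw [if_pos hx, ← Finset.sum_filter]
        have e1 : (univ.filter fun y : Fin t => (v x = k ∧ ¬ v y = m) ∧ x ≠ y)
            = (univ.filter fun y : Fin t => ¬ (v y = m)).erase x := by
          ext y
          simp only [Finset.mem_filter, Finset.mem_erase, Finset.mem_univ, true_and]
          constructor
          · rintro ⟨⟨-, h1⟩, h2⟩; exact ⟨fun h => h2 h.symm, h1⟩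
          · rintro ⟨h2, h1⟩; exact ⟨⟨hx, h1⟩, fun h => h2 h.symm⟩
        rw [e1, Finset.sum_const, Finset.card_erase_of_mem, hBc, smul_eq_mul]
        simp only [Finset.mem_filter, Finset.mem_univ, true_and]
        intro h
        exact hkm (hx.symm.trans h)
      · rw [if_neg hx]
        apply Finset.sum_eq_zero
        intro y _
        rw [if_neg]
        rintro ⟨⟨h, -⟩, -⟩
        exact hx h
    rw [Finset.sum_congr rfl fun x _ => step x, ← Finset.sum_filter, Finset.sum_const,
      smul_eq_mul]
  -- denominator count
  have hD : Nat.card ↥{σ : Equiv.Perm (Fin t) | v (σ q) ≠ m}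
      = (t - b) * ((t - 1) * c) := by
    rw [Nat.card_congr (show ↥{σ : Equiv.Perm (Fin t) | v (σ q) ≠ m}
      ≃ {σ : Equiv.Perm (Fin t) // ¬ (v (σ q) = m)} from Equiv.refl _)]
    rw [Nat.card_eq_fintype_card, Fintype.card_subtype]
    rw [card_event p q hpq (fun _ y => ¬ (v y = m)) hpq, Finset.sum_comm]
    have step : ∀ y : Fin t, (∑ x : Fin t, if (¬ v y = m) ∧ x ≠ y then c else 0)
        = if ¬ (v y = m) then (t - 1) * c else 0 := by
      intro y
      by_cases hy : v y = m
      · rw [if_neg (by simpa using hy)]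
        apply Finset.sum_eq_zero
        intro x _
        rw [if_neg]
        rintro ⟨h, -⟩
        exact h hy
      · rw [if_pos (by simpa using hy), ← Finset.sum_filter]
        have e1 : (univ.filter fun x : Fin t => (¬ v y = m) ∧ x ≠ y)
            = (univ : Finset (Fin t)).erase y := by
          ext x
          simp only [Finset.mem_filter, Finset.mem_erase, Finset.mem_univ, true_and,
            and_true]
          constructor
          · rintro ⟨-, h2⟩; exact h2
          · intro h2; exact ⟨hy, h2⟩
        rw [e1, Finset.sum_const, Finset.card_erase_of_mem (Finset.mem_univ _),
          Finset.card_univ, Fintype.card_fin, smul_eq_mul]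
    rw [Finset.sum_congr rfl fun y _ => step y, ← Finset.sum_filter, Finset.sum_const,
      smul_eq_mul, hBc]
  rw [PMF.toOuterMeasure_uniformOfFintype_apply, PMF.toOuterMeasure_uniformOfFintype_apply]
  simp only [← Nat.card_eq_fintype_card]
  rw [hN, hD]
  rw [Nat.cast_mul, Nat.cast_mul, Nat.cast_mul, Nat.cast_mul]
  exact ratio_helper _ _ _ _ _ _
    (Nat.cast_ne_zero.mpr (by omega)) (ENNReal.natCast_ne_top _)
    (Nat.cast_ne_zero.mpr (by omega)) (ENNReal.natCast_ne_top _)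
    (Nat.cast_ne_zero.mpr hc0) (ENNReal.natCast_ne_top _)
    (Nat.cast_ne_zero.mpr (Nat.pos_iff_ne_zero.mp Nat.card_pos)) (ENNReal.natCast_ne_top _)

/-- Conditional probability, different-value case (Appendix A): if `count m < t`, then
for every value `k ≠ m` the conditional probability that the first card drawn has
value `k`, given that the dealer's hole card does not have value `m`, equals
`(count k / (t − 1)) * ((t − count m − 1) / (t − count m))`. -/
theorem cond_prob_first_eq_k_given_hole_ne_m
    (t : ℕ) (ht : 2 ≤ t) (v : Fin t → Fin 10) (k m : Fin 10) (hkm : k ≠ m)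
    (hm : (Finset.univ.filter (fun i => v i = m)).card < t) :
    ((PMF.uniformOfFintype (Equiv.Perm (Fin t))).toOuterMeasure
        {σ : Equiv.Perm (Fin t) |
          v (σ ⟨0, by omega⟩) = k ∧ v (σ ⟨t - 1, by omega⟩) ≠ m})
      / ((PMF.uniformOfFintype (Equiv.Perm (Fin t))).toOuterMeasure
          {σ : Equiv.Perm (Fin t) | v (σ ⟨t - 1, by omega⟩) ≠ m})
      = (((Finset.univ.filter (fun i => v i = k)).card : ℝ≥0∞)
            / ((t - 1 : ℕ) : ℝ≥0∞))
        * (((t - (Finset.univ.filter (fun i => v i = m)).card - 1 : ℕ) : ℝ≥0∞)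
            / ((t - (Finset.univ.filter (fun i => v i = m)).card : ℕ) : ℝ≥0∞)) := by
  exact cond_aux t ht v k m hkm hm ⟨0, by omega⟩ ⟨t - 1, by omega⟩
    (by simp only [ne_eq, Fin.mk.injEq]; omega)
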